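/- Suppose the beliefs Π are fully overlapping. Let T* ⊆ T be nonempty, let t₁ ∈ T* satisfy v(t₁) ≤ v(t) for all t ∈ T*, and let the designer's belief π_d ∈ Δ(S) satisfy π_d ∈ Π(t₁). Then: (a) every menu c : T* → ℝ^S that is incentive compatible and individually rational for T* satisfies π_d·c(t) ≤ v(t₁) for every t ∈ T* (so the designer's expected revenue ∑_{t∈T*} π_d·c(t) is at most |T*|·v(t₁)); and (b) the constant menu assigning every t ∈ T* the deterministic contract (v(t₁),…,v(t₁)) ∈ ℝ^S is incentive compatible and individually rational for T* and attains this bound. -/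
import Mathlib


noncomputable section

/-- Euclidean inner product on ℝ^S. -/
def dotp {S : Type*} [Fintype S] (x y : S → ℝ) : ℝ := ∑ s, x s * y s

/-- A set `A ⊆ ℝ^S` has full dimension if the only vector orthogonal to all of `A` is `0`. -/
def FullDim {S : Type*} [Fintype S] (A : Set (S → ℝ)) : Prop :=
  ∀ x : S → ℝ, (∀ a ∈ A, dotp a x = 0) → x = 0

/-- `c` is incentive compatible for the subset `Ts` of types. -/
def ICFor {S T : Type*} [Fintype S]
    (P : T → Set (S → ℝ)) (Ts : Set T) (c : T → (S → ℝ)) : Prop :=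
  ∀ t ∈ Ts, ∀ s ∈ Ts, ∀ π ∈ P t, dotp π (c t) ≤ dotp π (c s)

/-- `c` is individually rational for the subset `Ts` of types. -/
def IRFor {S T : Type*} [Fintype S]
    (P : T → Set (S → ℝ)) (v : T → ℝ) (Ts : Set T) (c : T → (S → ℝ)) : Prop :=
  ∀ t ∈ Ts, ∀ π ∈ P t, dotp π (c t) ≤ v t

theorem stmt_9 {S T : Type*} [Fintype S] [Fintype T] [Nonempty S] [Nonempty T]
    (P : T → Set (S → ℝ))
    (hne : ∀ t, (P t).Nonempty) (hcl : ∀ t, IsClosed (P t))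
    (hcv : ∀ t, Convex ℝ (P t)) (hsub : ∀ t, P t ⊆ stdSimplex ℝ S)
    (v : T → ℝ)
    (hov : ∀ t t' : T, FullDim (P t ∩ P t'))
    (Ts : Set T) (hTs : Ts.Nonempty) (t₁ : T) (ht₁ : t₁ ∈ Ts)
    (hmin : ∀ t ∈ Ts, v t₁ ≤ v t)
    (πd : S → ℝ) (hπd : πd ∈ P t₁) :
    -- (a) any incentive compatible and individually rational menu for Ts yields the
    -- designer expected revenue at most `v t₁` from each type, hence at most `|Ts| * v t₁` in total
    (∀ c : T → (S → ℝ), ICFor P Ts c → IRFor P v Ts c →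
      (∀ t ∈ Ts, dotp πd (c t) ≤ v t₁) ∧
      ∑ t ∈ Ts.toFinite.toFinset, dotp πd (c t) ≤ (Ts.toFinite.toFinset.card : ℝ) * v t₁) ∧
    -- (b) the constant deterministic menu `v t₁` is incentive compatible and individually
    -- rational for Ts and attains this bound
    (ICFor P Ts (fun _ _ => v t₁) ∧ IRFor P v Ts (fun _ _ => v t₁) ∧
      (∀ t ∈ Ts, dotp πd ((fun _ _ => v t₁ : T → S → ℝ) t) = v t₁) ∧
      ∑ t ∈ Ts.toFinite.toFinset, dotp πd ((fun _ _ => v t₁ : T → S → ℝ) t)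
        = (Ts.toFinite.toFinset.card : ℝ) * v t₁) := by
  have hconst : ∀ π : S → ℝ, π ∈ stdSimplex ℝ S → ∀ r : ℝ, dotp π (fun _ => r) = r := by
    intro π hπ r
    simp only [dotp]
    rw [← Finset.sum_mul, hπ.2, one_mul]
  have hπd1 : dotp πd (fun _ => v t₁) = v t₁ := hconst πd (hsub t₁ hπd) (v t₁)
  constructor
  · intro c hIC hIR
    have heq : ∀ t ∈ Ts, c t = c t₁ := by
      intro t ht
      have h0 : (fun u => c t u - c t₁ u) = 0 := by
        apply hov t t₁
        intro a ha
        have h1 := hIC t ht t₁ ht₁ a ha.1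
        have h2 := hIC t₁ ht₁ t ht a ha.2
        simp only [dotp, mul_sub, Finset.sum_sub_distrib]
        simp only [dotp] at h1 h2
        linarith
      funext u
      have := congrFun h0 u
      simpa [sub_eq_zero] using this
    have hbound : ∀ t ∈ Ts, dotp πd (c t) ≤ v t₁ := by
      intro t ht
      rw [heq t ht]
      exact hIR t₁ ht₁ πd hπd
    refine ⟨hbound, ?_⟩
    calc ∑ t ∈ Ts.toFinite.toFinset, dotp πd (c t)
        ≤ ∑ _t ∈ Ts.toFinite.toFinset, v t₁ :=
          Finset.sum_le_sum fun t ht => hbound t ((Ts.toFinite.mem_toFinset).mp ht)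
      _ = (Ts.toFinite.toFinset.card : ℝ) * v t₁ := by
          rw [Finset.sum_const, nsmul_eq_mul]
  · refine ⟨?_, ?_, fun t _ => hπd1, ?_⟩
    · intro t _ s _ π hπ
      exact le_refl _
    · intro t ht π hπ
      rw [hconst π (hsub t hπ) (v t₁)]
      exact hmin t ht
    · rw [Finset.sum_congr rfl fun t _ => hπd1, Finset.sum_const, nsmul_eq_mul]
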